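/- Let Q = Q+(2n−1,q) with n ≥ 2, let μ be an integer-valued function on the points of Q satisfying Property (*) with parameter x (x a positive integer), and let ℓ0 be a projective line entirely contained in Q. Then q·Σ_{P∈ℓ0⊥} μ(P) + x·θ_{n−1} = q^{n−1}·Σ_{P∈ℓ0} μ(P) + (q+1)·x·θ_{n−2}, where ℓ0⊥ denotes the set of points of Q collinear with every point of ℓ0, and the second sum ranges over the q+1 projective points of ℓ0. -/
import Mathlib


/-- `thgeom q k = 1 + q + ⋯ + q^(k-1)`, i.e. `θ_{k-1}` in the paper's notation,
so that `θ_j = thgeom q (j+1)` and `θ_{-1} = thgeom q 0 = 0`. -/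
def thgeom (q k : ℕ) : ℕ := ∑ i ∈ Finset.range k, q ^ i

variable {𝔽 : Type} [Field 𝔽]

/-- The hyperbolic quadratic form `f(x) = x_1x_2 + x_3x_4 + ⋯ + x_{2m-1}x_{2m}` on `𝔽^{2m}`. -/
def hypQ (m : ℕ) (v : Fin (2 * m) → 𝔽) : 𝔽 :=
  ∑ i : Fin m, v ⟨2 * i.val, by have := i.isLt; omega⟩ *
    v ⟨2 * i.val + 1, by have := i.isLt; omega⟩

/-- The polar bilinear form `b(x,y) = f(x+y) − f(x) − f(y)`. -/
def hypB (m : ℕ) (v w : Fin (2 * m) → 𝔽) : 𝔽 := hypQ m (v + w) - hypQ m v - hypQ m w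

/-- The projective point `P` lies on the hyperbolic quadric. -/
def onQ {m : ℕ} (P : Projectivization 𝔽 (Fin (2 * m) → 𝔽)) : Prop := hypQ m P.rep = 0

/-- The set of points of the hyperbolic quadric `Q⁺(2m−1, q)` inside `PG(2m−1,q)`. -/
def Qset (𝔽 : Type) [Field 𝔽] (m : ℕ) : Set (Projectivization 𝔽 (Fin (2 * m) → 𝔽)) :=
  {P | onQ P}

/-- Two points are collinear if the polar form vanishes on their representatives. -/
def Collin {m : ℕ} (P P' : Projectivization 𝔽 (Fin (2 * m) → 𝔽)) : Prop :=
  hypB m P.rep P'.rep = 0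

/-- `perp P` is `P⊥`: the set of points of the quadric collinear with `P`. -/
def perp {m : ℕ} (P : Projectivization 𝔽 (Fin (2 * m) → 𝔽)) :
    Set (Projectivization 𝔽 (Fin (2 * m) → 𝔽)) :=
  {P' | onQ P' ∧ Collin P P'}

/-- The set of projective points lying in a subspace `W` of the ambient space. -/
def pts {m : ℕ} (W : Submodule 𝔽 (Fin (2 * m) → 𝔽)) :
    Set (Projectivization 𝔽 (Fin (2 * m) → 𝔽)) :=
  {P | P.rep ∈ W}

/-- `LSet P0` is `L(P0)`: the set of lines of the quadric through `P0`
(projective lines = 2-dimensional subspaces of `V`, entirely contained in the quadric). -/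
def LSet {m : ℕ} (P0 : Projectivization 𝔽 (Fin (2 * m) → 𝔽)) :
    Set (Submodule 𝔽 (Fin (2 * m) → 𝔽)) :=
  {ℓ | Module.finrank 𝔽 ℓ = 2 ∧ P0.rep ∈ ℓ ∧ ∀ P ∈ pts ℓ, onQ P}

instance {𝔽 : Type} [Field 𝔽] [Finite 𝔽] {k : ℕ} :
    Finite (Projectivization 𝔽 (Fin k → 𝔽)) :=
  Quotient.finite _

/-- Property (*): for every point `P` of the quadric `Q⁺(2n−1,q)`,
`Σ_{P1 ∈ P⊥} μ(P1) = x·θ_{n−2} + q^{n−1}·μ(P)`. -/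
def PropStar (q n x : ℕ) {𝔽 : Type} [Field 𝔽]
    (μ : Projectivization 𝔽 (Fin (2 * n) → 𝔽) → ℤ) : Prop :=
  ∀ P ∈ Qset 𝔽 n,
    ∑ᶠ P1 ∈ perp P, μ P1 = (x : ℤ) * thgeom q (n - 1) + (q : ℤ) ^ (n - 1) * μ P

/-- Property (**): for every pair `P1, P2` of non-collinear points of the quadric
`Q⁺(2n−1,q)`, `Σ_{P' ∈ {P1,P2}⊥} μ(P') = x·θ_{n−3} + q^{n−2}·(μ(P1)+μ(P2))`. -/
def PropStarStar (q n x : ℕ) {𝔽 : Type} [Field 𝔽]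
    (μ : Projectivization 𝔽 (Fin (2 * n) → 𝔽) → ℤ) : Prop :=
  ∀ P1 ∈ Qset 𝔽 n, ∀ P2 ∈ Qset 𝔽 n, ¬ Collin P1 P2 →
    ∑ᶠ P' ∈ perp P1 ∩ perp P2, μ P' =
      (x : ℤ) * thgeom q (n - 2) + (q : ℤ) ^ (n - 2) * (μ P1 + μ P2)

namespace HQaux

variable {m : ℕ}

lemma hypB_eq (v w : Fin (2 * m) → 𝔽) :
    hypB m v w = ∑ i : Fin m,
      (v ⟨2 * i.val, by have := i.isLt; omega⟩ * w ⟨2 * i.val + 1, by have := i.isLt; omega⟩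
       + v ⟨2 * i.val + 1, by have := i.isLt; omega⟩ * w ⟨2 * i.val, by have := i.isLt; omega⟩) := by
  unfold hypB hypQ
  rw [← Finset.sum_sub_distrib, ← Finset.sum_sub_distrib]
  apply Finset.sum_congr rfl
  intro i _
  simp only [Pi.add_apply]
  ring

lemma hypB_symm (v w : Fin (2 * m) → 𝔽) : hypB m v w = hypB m w v := by
  rw [hypB_eq, hypB_eq]
  apply Finset.sum_congr rfl
  intro i _; ring

lemma hypB_add_left (v v' w : Fin (2 * m) → 𝔽) :
    hypB m (v + v') w = hypB m v w + hypB m v' w := by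
  rw [hypB_eq, hypB_eq, hypB_eq, ← Finset.sum_add_distrib]
  apply Finset.sum_congr rfl
  intro i _; simp only [Pi.add_apply]; ring

lemma hypB_smul_left (c : 𝔽) (v w : Fin (2 * m) → 𝔽) :
    hypB m (c • v) w = c * hypB m v w := by
  rw [hypB_eq, hypB_eq, Finset.mul_sum]
  apply Finset.sum_congr rfl
  intro i _; simp only [Pi.smul_apply, smul_eq_mul]; ring

lemma hypB_smul_right (c : 𝔽) (v w : Fin (2 * m) → 𝔽) :
    hypB m v (c • w) = c * hypB m v w := by
  rw [hypB_symm, hypB_smul_left, hypB_symm]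

lemma hypB_add_right (v w w' : Fin (2 * m) → 𝔽) :
    hypB m v (w + w') = hypB m v w + hypB m v w' := by
  rw [hypB_symm, hypB_add_left, hypB_symm w v, hypB_symm w' v]

lemma hypQ_smul (c : 𝔽) (v : Fin (2 * m) → 𝔽) : hypQ m (c • v) = c ^ 2 * hypQ m v := by
  unfold hypQ
  rw [Finset.mul_sum]
  apply Finset.sum_congr rfl
  intro i _; simp only [Pi.smul_apply, smul_eq_mul]; ring

lemma hypQ_add (v w : Fin (2 * m) → 𝔽) :
    hypQ m (v + w) = hypQ m v + hypQ m w + hypB m v w := by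
  unfold hypB; ring

lemma hypB_self (v : Fin (2 * m) → 𝔽) : hypB m v v = 2 * hypQ m v := by
  rw [hypB_eq]
  unfold hypQ
  rw [Finset.mul_sum]
  apply Finset.sum_congr rfl
  intro i _; ring

/-- `hypB` with fixed second argument, as a linear map. -/
def hypBL (m : ℕ) (w : Fin (2 * m) → 𝔽) : (Fin (2 * m) → 𝔽) →ₗ[𝔽] 𝔽 where
  toFun v := hypB m v w
  map_add' v v' := hypB_add_left v v' w
  map_smul' c v := by simp [hypB_smul_left c v w]

@[simp] lemma hypBL_apply (w v : Fin (2 * m) → 𝔽) : hypBL m w v = hypB m v w := rfl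

lemma exists_unit_rep (v : Fin (2 * m) → 𝔽) (hv : v ≠ 0) :
    ∃ a : 𝔽ˣ, (Projectivization.mk 𝔽 v hv).rep = a • v := by
  have h := Projectivization.mk_rep (Projectivization.mk 𝔽 v hv)
  rw [Projectivization.mk_eq_mk_iff] at h
  obtain ⟨a, ha⟩ := h
  exact ⟨a, ha.symm⟩

end HQaux

namespace HQaux
variable [Fintype 𝔽]

lemma qpos : 0 < Fintype.card 𝔽 := Fintype.card_pos

lemma card_mul_eq_zero :
    Nat.card {p : 𝔽 × 𝔽 // p.1 * p.2 = 0} + 1 = 2 * Fintype.card 𝔽 := by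
  classical
  rw [Nat.card_eq_fintype_card, Fintype.card_subtype]
  have h1 : ((Finset.univ : Finset (𝔽 × 𝔽)).filter (fun p => p.1 * p.2 = 0))
      = ((Finset.univ : Finset (𝔽 × 𝔽)).filter (fun p => p.1 = 0)) ∪
        ((Finset.univ : Finset (𝔽 × 𝔽)).filter (fun p => p.2 = 0)) := by
    ext p
    simp [mul_eq_zero]
  have h5 := Finset.card_union_add_card_inter
    ((Finset.univ : Finset (𝔽 × 𝔽)).filter (fun p => p.1 = 0))
    ((Finset.univ : Finset (𝔽 × 𝔽)).filter (fun p => p.2 = 0))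
  have h2 : ((Finset.univ : Finset (𝔽 × 𝔽)).filter (fun p => p.1 = 0)).card
      = Fintype.card 𝔽 := by
    rw [← Fintype.card_subtype]
    exact Fintype.card_congr ⟨fun p => p.1.2, fun b => ⟨(0, b), rfl⟩,
      fun p => by ext <;> simp [p.2], fun b => rfl⟩
  have h3 : ((Finset.univ : Finset (𝔽 × 𝔽)).filter (fun p => p.2 = 0)).card
      = Fintype.card 𝔽 := by
    rw [← Fintype.card_subtype]
    exact Fintype.card_congr ⟨fun p => p.1.1, fun b => ⟨(b, 0), rfl⟩,
      fun p => by ext <;> simp [p.2], fun b => rfl⟩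
  have h4 : (((Finset.univ : Finset (𝔽 × 𝔽)).filter (fun p => p.1 = 0)) ∩
        ((Finset.univ : Finset (𝔽 × 𝔽)).filter (fun p => p.2 = 0))).card = 1 := by
    rw [Finset.card_eq_one]
    exact ⟨(0,0), by ext p; simp [Prod.ext_iff]⟩
  rw [h1]
  omega

lemma card_mul_eq_ne (a : 𝔽) (ha : a ≠ 0) :
    Nat.card {p : 𝔽 × 𝔽 // p.1 * p.2 = a} + 1 = Fintype.card 𝔽 := by
  classical
  rw [Nat.card_eq_fintype_card]
  have : Fintype.card {p : 𝔽 × 𝔽 // p.1 * p.2 = a} = Fintype.card 𝔽ˣ := by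
    apply Fintype.card_congr
    refine ⟨fun p => Units.mk0 p.1.1 (fun h => ha (by rw [← p.2, h, zero_mul])),
           fun u => ⟨(u.1, u.1⁻¹ * a), by
             field_simp⟩, fun p => ?_, fun u => by ext; rfl⟩
    have h1 : (p.1.1 : 𝔽) ≠ 0 := fun h => ha (by rw [← p.2, h, zero_mul])
    have hp := p.2
    ext
    · rfl
    · show p.1.1⁻¹ * a = p.1.2
      field_simp
      linear_combination -hp
  rw [this, Fintype.card_units]
  have h6 : 1 ≤ Fintype.card 𝔽 := Fintype.card_pos
  omega

open Classical in
/-- uniform count: #{(s,t) : a + s*t = 0} = (q-1) + (if a = 0 then q else 0). -/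
lemma card_mul_eq' (a : 𝔽) :
    Nat.card {p : 𝔽 × 𝔽 // a + p.1 * p.2 = 0} + 1
      = Fintype.card 𝔽 + (if a = 0 then Fintype.card 𝔽 else 0) := by
  by_cases ha : a = 0
  · subst ha
    rw [if_pos rfl]
    have he : ∀ p : 𝔽 × 𝔽, ((0:𝔽) + p.1 * p.2 = 0) ↔ (p.1 * p.2 = 0) := by
      intro p; constructor <;> intro h <;> linear_combination h
    have e : {p : 𝔽 × 𝔽 // (0:𝔽) + p.1 * p.2 = 0} ≃ {p : 𝔽 × 𝔽 // p.1 * p.2 = 0} :=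
      Equiv.subtypeEquiv (Equiv.refl _) he
    rw [Nat.card_congr e]
    have := card_mul_eq_zero (𝔽 := 𝔽)
    have h6 : 1 ≤ Fintype.card 𝔽 := Fintype.card_pos
    omega
  · rw [if_neg ha]
    have he : ∀ p : 𝔽 × 𝔽, (a + p.1 * p.2 = 0) ↔ (p.1 * p.2 = -a) := by
      intro p; constructor <;> intro h <;> linear_combination h
    have e : {p : 𝔽 × 𝔽 // a + p.1 * p.2 = 0} ≃ {p : 𝔽 × 𝔽 // p.1 * p.2 = -a} :=
      Equiv.subtypeEquiv (Equiv.refl _) he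
    rw [Nat.card_congr e]
    have := card_mul_eq_ne (-a) (neg_ne_zero.mpr ha)
    omega

def splitE (m : ℕ) : (Fin (2*m+2) → 𝔽) ≃ (Fin (2*m) → 𝔽) × 𝔽 × 𝔽 where
  toFun v := (fun i => v ⟨i.val, by have := i.isLt; omega⟩, v ⟨2*m, by omega⟩, v ⟨2*m+1, by omega⟩)
  invFun p := fun j => if h : j.val < 2*m then p.1 ⟨j.val, h⟩
    else if j.val = 2*m then p.2.1 else p.2.2
  left_inv v := by
    funext j
    by_cases h : j.val < 2*m
    · simp [h]
    · by_cases h2 : j.val = 2*m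
      · simp only [dif_neg h, if_pos h2]
        congr 1
        exact Fin.ext h2.symm
      · simp only [dif_neg h, if_neg h2]
        congr 1
        apply Fin.ext
        show 2*m+1 = j.val
        have := j.isLt
        omega
  right_inv p := by
    ext i
    · simp [i.isLt]
    · simp
    · simp

omit [Fintype 𝔽] in
lemma hypQ_split (m : ℕ) (v : Fin (2*m+2) → 𝔽) :
    hypQ (m+1) v = hypQ m ((splitE m v).1) + v ⟨2*m, by omega⟩ * v ⟨2*m+1, by omega⟩ := by
  unfold hypQ
  rw [Fin.sum_univ_castSucc]
  rfl

lemma card_step (m : ℕ) :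
    Nat.card {v : Fin (2*(m+1)) → 𝔽 // hypQ (m+1) v = 0} + Fintype.card 𝔽 ^ (2*m)
      = Fintype.card 𝔽 * Nat.card {v : Fin (2*m) → 𝔽 // hypQ m v = 0}
        + Fintype.card 𝔽 ^ (2*m) * Fintype.card 𝔽 := by
  classical
  have e1 : {v : Fin (2*(m+1)) → 𝔽 // hypQ (m+1) v = 0}
      ≃ {p : (Fin (2*m) → 𝔽) × (𝔽 × 𝔽) // hypQ m p.1 + p.2.1 * p.2.2 = 0} :=
    (Equiv.subtypeEquiv (splitE m) (fun v => by rw [hypQ_split m v]; exact Iff.rfl))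
  have e2 : {p : (Fin (2*m) → 𝔽) × (𝔽 × 𝔽) // hypQ m p.1 + p.2.1 * p.2.2 = 0}
      ≃ Σ a : Fin (2*m) → 𝔽, {b : 𝔽 × 𝔽 // hypQ m a + b.1 * b.2 = 0} :=
    Equiv.subtypeProdEquivSigmaSubtype
      (fun (a : Fin (2*m) → 𝔽) (b : 𝔽 × 𝔽) => hypQ m a + b.1 * b.2 = 0)
  rw [Nat.card_congr (e1.trans e2), Nat.card_eq_fintype_card, Fintype.card_sigma]
  have hfib : ∀ a : Fin (2*m) → 𝔽,
      Fintype.card {b : 𝔽 × 𝔽 // hypQ m a + b.1 * b.2 = 0} + 1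
        = Fintype.card 𝔽 + (if hypQ m a = 0 then Fintype.card 𝔽 else 0) := by
    intro a
    rw [← Nat.card_eq_fintype_card]
    rw [card_mul_eq' (hypQ m a)]
  have hcard : Fintype.card (Fin (2*m) → 𝔽) = Fintype.card 𝔽 ^ (2*m) := by
    simp
  have hfilt : (Finset.univ.filter (fun a : Fin (2*m) → 𝔽 => hypQ m a = 0)).card
      = Nat.card {v : Fin (2*m) → 𝔽 // hypQ m v = 0} := by
    rw [Nat.card_eq_fintype_card, Fintype.card_subtype]
  have h := Finset.sum_congr rfl (fun (a : Fin (2*m) → 𝔽) (_ : a ∈ Finset.univ) => hfib a)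
  rw [Finset.sum_add_distrib, Finset.sum_add_distrib, Finset.sum_const, Finset.sum_const,
    Finset.sum_ite, Finset.sum_const, Finset.sum_const] at h
  simp only [smul_eq_mul, mul_one, mul_zero, add_zero, Finset.card_univ] at h
  rw [hcard, hfilt] at h
  have hB : Nat.card {v : Fin (2*m) → 𝔽 // hypQ m v = 0} * Fintype.card 𝔽
      = Fintype.card 𝔽 * Nat.card {v : Fin (2*m) → 𝔽 // hypQ m v = 0} := Nat.mul_comm _ _
  omega

lemma card_N (m : ℕ) :
    Nat.card {v : Fin (2*(m+1)) → 𝔽 // hypQ (m+1) v = 0}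
      = Fintype.card 𝔽 ^ m * (Fintype.card 𝔽 ^ (m+1) + Fintype.card 𝔽 - 1) := by
  classical
  have h6 : 1 ≤ Fintype.card 𝔽 := Fintype.card_pos
  induction m with
  | zero =>
    have h0 : Nat.card {v : Fin (2*0) → 𝔽 // hypQ 0 v = 0} = 1 := by
      have hz : ∀ v : Fin (2*0) → 𝔽, hypQ 0 v = 0 := by
        intro v
        unfold hypQ
        simp
      rw [Nat.card_eq_fintype_card, Fintype.card_eq_one_iff]
      refine ⟨⟨fun i => (i.elim0 : 𝔽), hz _⟩, ?_⟩
      rintro ⟨v, hv⟩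
      ext i
      exact i.elim0
    have E := card_step (𝔽 := 𝔽) 0
    rw [h0] at E
    norm_num at E ⊢
    omega
  | succ m ih =>
    have E := card_step (𝔽 := 𝔽) (m+1)
    rw [ih] at E
    have key : Fintype.card 𝔽 * (Fintype.card 𝔽 ^ m * (Fintype.card 𝔽 ^ (m+1) + Fintype.card 𝔽 - 1))
          + Fintype.card 𝔽 ^ (2*(m+1)) * Fintype.card 𝔽
        = Fintype.card 𝔽 ^ (m+1) * (Fintype.card 𝔽 ^ (m+1+1) + Fintype.card 𝔽 - 1)
          + Fintype.card 𝔽 ^ (2*(m+1)) := by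
      have h1 : Fintype.card 𝔽 ^ (m+1) + Fintype.card 𝔽 - 1
          = Fintype.card 𝔽 ^ (m+1) + (Fintype.card 𝔽 - 1) := by
        have : 1 ≤ Fintype.card 𝔽 ^ (m+1) := Nat.one_le_pow _ _ h6
        omega
      have h2 : Fintype.card 𝔽 ^ (m+1+1) + Fintype.card 𝔽 - 1
          = Fintype.card 𝔽 ^ (m+1+1) + (Fintype.card 𝔽 - 1) := by
        have : 1 ≤ Fintype.card 𝔽 ^ (m+1+1) := Nat.one_le_pow _ _ h6
        omega
      rw [h1, h2]
      ring
    omega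


omit [Fintype 𝔽] in
lemma hypB_single_odd (m : ℕ) (u : Fin (2*m) → 𝔽) (i0 : Fin m) (c : 𝔽) :
    hypB m u (Pi.single (⟨2*i0.val+1, by have := i0.isLt; omega⟩ : Fin (2*m)) c)
      = u ⟨2*i0.val, by have := i0.isLt; omega⟩ * c := by
  rw [hypB_eq]
  rw [Finset.sum_eq_single i0]
  · rw [Pi.single_apply, Pi.single_apply,
      if_pos rfl, if_neg (by simp only [Fin.mk.injEq]; omega)]
    ring
  · intro b _ hb
    have hbv : b.val ≠ i0.val := fun h => hb (Fin.ext h)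
    rw [Pi.single_apply, Pi.single_apply, if_neg (by simp only [Fin.mk.injEq]; omega),
      if_neg (by simp only [Fin.mk.injEq]; omega)]
    ring
  · intro h; exact absurd (Finset.mem_univ i0) h

omit [Fintype 𝔽] in
lemma hypB_single_even (m : ℕ) (u : Fin (2*m) → 𝔽) (i0 : Fin m) (c : 𝔽) :
    hypB m u (Pi.single (⟨2*i0.val, by have := i0.isLt; omega⟩ : Fin (2*m)) c)
      = u ⟨2*i0.val+1, by have := i0.isLt; omega⟩ * c := by
  rw [hypB_eq]
  rw [Finset.sum_eq_single i0]
  · rw [Pi.single_apply, Pi.single_apply,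
      if_pos rfl, if_neg (by simp only [Fin.mk.injEq]; omega)]
    ring
  · intro b _ hb
    have hbv : b.val ≠ i0.val := fun h => hb (Fin.ext h)
    rw [Pi.single_apply, Pi.single_apply, if_neg (by simp only [Fin.mk.injEq]; omega),
      if_neg (by simp only [Fin.mk.injEq]; omega)]
    ring
  · intro h; exact absurd (Finset.mem_univ i0) h

omit [Fintype 𝔽] in
lemma exists_dual (m : ℕ) (u : Fin (2*m) → 𝔽) (hu : u ≠ 0) :
    ∃ w : Fin (2*m) → 𝔽, hypB m u w = 1 := by
  obtain ⟨j, hj⟩ : ∃ j, u j ≠ 0 := by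
    by_contra h
    push_neg at h
    exact hu (funext h)
  have hjlt := j.isLt
  rcases Nat.even_or_odd j.val with ⟨k, hk⟩ | ⟨k, hk⟩
  · have hkm : k < m := by omega
    refine ⟨Pi.single (⟨2*(⟨k, hkm⟩ : Fin m).val+1, by omega⟩ : Fin (2*m)) (u j)⁻¹, ?_⟩
    rw [hypB_single_odd m u ⟨k, hkm⟩ (u j)⁻¹]
    have hje : (⟨2*(⟨k, hkm⟩ : Fin m).val, by omega⟩ : Fin (2*m)) = j := by
      apply Fin.ext
      show 2*k = j.val
      omega
    rw [hje]
    exact mul_inv_cancel₀ hj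
  · have hkm : k < m := by omega
    refine ⟨Pi.single (⟨2*(⟨k, hkm⟩ : Fin m).val, by omega⟩ : Fin (2*m)) (u j)⁻¹, ?_⟩
    rw [hypB_single_even m u ⟨k, hkm⟩ (u j)⁻¹]
    have hje : (⟨2*(⟨k, hkm⟩ : Fin m).val+1, by omega⟩ : Fin (2*m)) = j := by
      apply Fin.ext
      show 2*k+1 = j.val
      omega
    rw [hje]
    exact mul_inv_cancel₀ hj

section decomp

variable {m : ℕ} {u w : Fin (2*m) → 𝔽}

omit [Fintype 𝔽]

/-- Orthogonal decomposition w.r.t. a hyperbolic pair `u, w`. -/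
def decompE (m : ℕ) (u w : Fin (2*m) → 𝔽) (hbuu : hypB m u u = 0) (hbuw : hypB m u w = 1)
    (hbwu : hypB m w u = 1) (hbww : hypB m w w = 0) :
    ({z : Fin (2*m) → 𝔽 // hypB m u z = 0 ∧ hypB m w z = 0} × 𝔽 × 𝔽)
      ≃ (Fin (2*m) → 𝔽) where
  toFun p := p.1.1 + p.2.1 • u + p.2.2 • w
  invFun v := (⟨v - (hypB m w v) • u - (hypB m u v) • w,
      by simp only [sub_eq_add_neg, ← neg_smul, hypB_add_right, hypB_smul_right,
           hbuu, hbuw]; ring,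
      by simp only [sub_eq_add_neg, ← neg_smul, hypB_add_right, hypB_smul_right,
           hbwu, hbww]; ring⟩,
    hypB m w v, hypB m u v)
  left_inv p := by
    obtain ⟨⟨z, hz1, hz2⟩, s, t⟩ := p
    have h1 : hypB m w (z + s • u + t • w) = s := by
      simp only [hypB_add_right, hypB_smul_right, hbwu, hbww, hz2]; ring
    have h2 : hypB m u (z + s • u + t • w) = t := by
      simp only [hypB_add_right, hypB_smul_right, hbuu, hbuw, hz1]; ring
    simp only [h1, h2]
    refine Prod.ext (Subtype.ext ?_) rfl
    show (z + s • u + t • w) - s • u - t • w = z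
    funext i
    simp only [Pi.add_apply, Pi.sub_apply, Pi.smul_apply, smul_eq_mul]
    ring
  right_inv v := by
    funext i
    simp only [Pi.add_apply, Pi.sub_apply, Pi.smul_apply, smul_eq_mul]
    ring

@[simp] lemma decompE_apply (hbuu : hypB m u u = 0) (hbuw : hypB m u w = 1)
    (hbwu : hypB m w u = 1) (hbww : hypB m w w = 0)
    (p : {z : Fin (2*m) → 𝔽 // hypB m u z = 0 ∧ hypB m w z = 0} × 𝔽 × 𝔽) :
    decompE m u w hbuu hbuw hbwu hbww p = p.1.1 + p.2.1 • u + p.2.2 • w := rfl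

lemma keyQdecomp (huQ : hypQ m u = 0) (hwQ : hypQ m w = 0) (hbuw : hypB m u w = 1)
    (z : Fin (2*m) → 𝔽) (hz : hypB m u z = 0 ∧ hypB m w z = 0) (s t : 𝔽) :
    hypQ m (z + s • u + t • w) = hypQ m z + s * t := by
  have h1 : hypB m z u = 0 := by rw [hypB_symm]; exact hz.1
  have h2 : hypB m z w = 0 := by rw [hypB_symm]; exact hz.2
  simp only [hypQ_add, hypQ_smul, hypB_add_left, hypB_add_right, hypB_smul_left,
    hypB_smul_right, h1, h2, huQ, hwQ, hbuw]
  ring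

lemma keyUdecomp (hbuu : hypB m u u = 0) (hbuw : hypB m u w = 1)
    (z : Fin (2*m) → 𝔽) (hz : hypB m u z = 0 ∧ hypB m w z = 0) (s t : 𝔽) :
    hypB m u (z + s • u + t • w) = t := by
  simp only [hypB_add_right, hypB_smul_right, hbuu, hbuw, hz.1]; ring

end decomp

/-- Count of the tangent-hyperplane section of the quadric, at the vector level. -/
lemma card_perp_vec (m : ℕ) (u : Fin (2*m) → 𝔽) (hu : u ≠ 0) (huQ : hypQ m u = 0) :
    Fintype.card 𝔽 ^ 2 * Nat.card {v : Fin (2*m) → 𝔽 // hypQ m v = 0 ∧ hypB m u v = 0}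
        + Fintype.card 𝔽 ^ (2*m) * Fintype.card 𝔽
      = Fintype.card 𝔽 ^ 2 * Nat.card {v : Fin (2*m) → 𝔽 // hypQ m v = 0}
        + Fintype.card 𝔽 ^ (2*m) := by
  classical
  obtain ⟨w0, hw0⟩ := exists_dual m u hu
  set w : Fin (2*m) → 𝔽 := w0 + (-(hypQ m w0)) • u with hwdef
  have hbuu : hypB m u u = 0 := by rw [hypB_self, huQ, mul_zero]
  have hbuw : hypB m u w = 1 := by
    rw [hwdef, hypB_add_right, hypB_smul_right, hbuu, hw0]
    ring
  have hwQ : hypQ m w = 0 := by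
    rw [hwdef, hypQ_add, hypQ_smul, hypB_smul_right, hypB_symm w0 u, hw0, huQ]
    ring
  have hbww : hypB m w w = 0 := by rw [hypB_self, hwQ, mul_zero]
  have hbwu : hypB m w u = 1 := by rw [hypB_symm]; exact hbuw
  set U := {z : Fin (2*m) → 𝔽 // hypB m u z = 0 ∧ hypB m w z = 0} with hU
  set E := decompE m u w hbuu hbuw hbwu hbww with hE
  set q := Fintype.card 𝔽 with hq
  -- cardinality of U
  have hcardV : Nat.card (Fin (2*m) → 𝔽) = q ^ (2*m) := by
    rw [Nat.card_eq_fintype_card]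
    simp [hq]
  have hUcard : Nat.card U * (q * q) = q ^ (2*m) := by
    have h := Nat.card_congr E
    rw [Nat.card_prod, Nat.card_prod, Nat.card_eq_fintype_card (α := 𝔽), hcardV] at h
    exact h
  -- transfer the two counts through E
  have eN : {v : Fin (2*m) → 𝔽 // hypQ m v = 0}
      ≃ Σ z : U, {b : 𝔽 × 𝔽 // hypQ m z.1 + b.1 * b.2 = 0} := by
    refine (Equiv.subtypeEquiv E.symm ?_).trans
      (Equiv.subtypeProdEquivSigmaSubtype (fun (z : U) (b : 𝔽 × 𝔽) => hypQ m z.1 + b.1 * b.2 = 0))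
    intro v
    conv_lhs => rw [← E.apply_symm_apply v, hE, decompE_apply,
      keyQdecomp huQ hwQ hbuw _ (E.symm v).1.2]
  have eM : {v : Fin (2*m) → 𝔽 // hypQ m v = 0 ∧ hypB m u v = 0}
      ≃ Σ z : U, {b : 𝔽 × 𝔽 // (hypQ m z.1 + b.1 * b.2 = 0) ∧ b.2 = 0} := by
    refine (Equiv.subtypeEquiv E.symm ?_).trans
      (Equiv.subtypeProdEquivSigmaSubtype
        (fun (z : U) (b : 𝔽 × 𝔽) => (hypQ m z.1 + b.1 * b.2 = 0) ∧ b.2 = 0))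
    intro v
    conv_lhs => rw [← E.apply_symm_apply v, hE, decompE_apply,
      keyQdecomp huQ hwQ hbuw _ (E.symm v).1.2,
      keyUdecomp hbuu hbuw _ (E.symm v).1.2]
  -- fiber counts
  have hfibN : ∀ z : U, Fintype.card {b : 𝔽 × 𝔽 // hypQ m z.1 + b.1 * b.2 = 0} + 1
      = q + (if hypQ m z.1 = 0 then q else 0) := by
    intro z
    rw [← Nat.card_eq_fintype_card, card_mul_eq' (hypQ m z.1)]
  have hfibM : ∀ z : U, Fintype.card {b : 𝔽 × 𝔽 // (hypQ m z.1 + b.1 * b.2 = 0) ∧ b.2 = 0}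
      = (if hypQ m z.1 = 0 then q else 0) := by
    intro z
    by_cases hz : hypQ m z.1 = 0
    · rw [if_pos hz]
      have e : {b : 𝔽 × 𝔽 // (hypQ m z.1 + b.1 * b.2 = 0) ∧ b.2 = 0} ≃ 𝔽 := by
        refine ⟨fun b => b.1.1, fun s => ⟨(s, 0), by rw [hz]; ring_nf, rfl⟩, ?_, fun s => rfl⟩
        rintro ⟨⟨s, t⟩, hb, ht⟩
        have ht' : t = 0 := ht
        apply Subtype.ext
        show ((s, (0:𝔽)) : 𝔽 × 𝔽) = (s, t)
        rw [ht']
      rw [Fintype.card_congr e]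
    · rw [if_neg hz]
      rw [Fintype.card_eq_zero_iff]
      constructor
      rintro ⟨⟨s, t⟩, hb, ht⟩
      apply hz
      have ht' : t = 0 := ht
      rw [ht'] at hb
      linear_combination hb
  -- sum up
  set ZU := (Finset.univ.filter (fun z : U => hypQ m z.1 = 0)).card with hZU
  have hNsum : Nat.card {v : Fin (2*m) → 𝔽 // hypQ m v = 0} + Nat.card U
      = q * Nat.card U + q * ZU := by
    rw [Nat.card_congr eN, Nat.card_eq_fintype_card, Fintype.card_sigma]
    have h := Finset.sum_congr rfl (fun (z : U) (_ : z ∈ Finset.univ) => hfibN z)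
    rw [Finset.sum_add_distrib, Finset.sum_add_distrib, Finset.sum_const, Finset.sum_const,
      Finset.sum_ite, Finset.sum_const, Finset.sum_const] at h
    simp only [smul_eq_mul, mul_one, mul_zero, add_zero, Finset.card_univ] at h
    rw [Nat.card_eq_fintype_card, ← hZU] at *
    have c1 : ZU * q = q * ZU := Nat.mul_comm _ _
    have c2 : Fintype.card U * q = q * Fintype.card U := Nat.mul_comm _ _
    omega
  have hMsum : Nat.card {v : Fin (2*m) → 𝔽 // hypQ m v = 0 ∧ hypB m u v = 0}
      = q * ZU := by
    rw [Nat.card_congr eM, Nat.card_eq_fintype_card, Fintype.card_sigma]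
    have h := Finset.sum_congr rfl (fun (z : U) (_ : z ∈ Finset.univ) => hfibM z)
    rw [Finset.sum_ite, Finset.sum_const, Finset.sum_const] at h
    simp only [smul_eq_mul, mul_zero, add_zero] at h
    rw [h, ← hZU, Nat.mul_comm]
  -- final arithmetic
  rw [hMsum]
  have h4 : q^2 * (Nat.card {v : Fin (2*m) → 𝔽 // hypQ m v = 0} + Nat.card U)
      = q^2 * (q * Nat.card U + q * ZU) := by rw [hNsum]
  have h5 : q^(2*m) * q = q^2 * (q * Nat.card U) := by
    rw [← hUcard]; ring
  have h6 : q^(2*m) = q^2 * Nat.card U := by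
    rw [← hUcard]; ring
  rw [mul_add, mul_add] at h4
  rw [h5, h6]
  omega


/-- Transfer of counts from nonzero vectors to projective points. -/
lemma card_pts (m : ℕ) (condP : Projectivization 𝔽 (Fin (2*m) → 𝔽) → Prop)
    (condV : (Fin (2*m) → 𝔽) → Prop)
    (h : ∀ (v : Fin (2*m) → 𝔽) (hv : v ≠ 0), (condP (Projectivization.mk 𝔽 v hv) ↔ condV v)) :
    Nat.card {v : Fin (2*m) → 𝔽 // v ≠ 0 ∧ condV v}
      = Nat.card {P : Projectivization 𝔽 (Fin (2*m) → 𝔽) // condP P} * (Fintype.card 𝔽 - 1) := by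
  classical
  have hg : ∀ (pa : {P : Projectivization 𝔽 (Fin (2*m) → 𝔽) // condP P} × 𝔽ˣ),
      (pa.2 : 𝔽ˣ) • pa.1.1.rep ≠ 0 ∧ condV ((pa.2 : 𝔽ˣ) • pa.1.1.rep) := by
    intro pa
    have hne : (pa.2 : 𝔽ˣ) • pa.1.1.rep ≠ 0 := by
      rw [Units.smul_def]
      exact smul_ne_zero (Units.ne_zero _) (Projectivization.rep_nonzero _)
    refine ⟨hne, ?_⟩
    rw [← h _ hne]
    have hmk : Projectivization.mk 𝔽 ((pa.2 : 𝔽ˣ) • pa.1.1.rep) hne = pa.1.1 := by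
      conv_rhs => rw [← Projectivization.mk_rep pa.1.1]
      rw [Projectivization.mk_eq_mk_iff]
      exact ⟨pa.2, rfl⟩
    rw [hmk]
    exact pa.1.2
  set g : {P : Projectivization 𝔽 (Fin (2*m) → 𝔽) // condP P} × 𝔽ˣ
      → {v : Fin (2*m) → 𝔽 // v ≠ 0 ∧ condV v} :=
    fun pa => ⟨(pa.2 : 𝔽ˣ) • pa.1.1.rep, hg pa⟩ with hgdef
  have hbij : Function.Bijective g := by
    constructor
    · rintro ⟨⟨P, hP⟩, a⟩ ⟨⟨P', hP'⟩, a'⟩ heq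
      have hv : a • P.rep = a' • P'.rep := congrArg Subtype.val heq
      have hPP : P = P' := by
        conv_lhs => rw [← Projectivization.mk_rep P]
        conv_rhs => rw [← Projectivization.mk_rep P']
        rw [Projectivization.mk_eq_mk_iff]
        exact ⟨a⁻¹ * a', by rw [mul_smul, ← hv, inv_smul_smul]⟩
      subst hPP
      have hv' : (a : 𝔽) • P.rep = (a' : 𝔽) • P.rep := by
        rw [← Units.smul_def, ← Units.smul_def]
        exact hv
      have ha : (a : 𝔽) = (a' : 𝔽) :=
        smul_left_injective 𝔽 (Projectivization.rep_nonzero P) hv'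
      simp only [Prod.mk.injEq, Subtype.mk.injEq, true_and]
      exact Units.ext ha
    · rintro ⟨v, hv0, hcv⟩
      obtain ⟨b, hb⟩ := exists_unit_rep v hv0
      refine ⟨⟨⟨Projectivization.mk 𝔽 v hv0, (h v hv0).mpr hcv⟩, b⁻¹⟩, ?_⟩
      apply Subtype.ext
      show (b⁻¹ : 𝔽ˣ) • (Projectivization.mk 𝔽 v hv0).rep = v
      rw [hb, inv_smul_smul]
  rw [← Nat.card_congr (Equiv.ofBijective g hbij), Nat.card_prod,
    Nat.card_eq_fintype_card (α := 𝔽ˣ), Fintype.card_units]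

/-- Removing zero from a count of vectors. -/
lemma card_nonzero (m : ℕ) (cond : (Fin (2*m) → 𝔽) → Prop) (h0 : cond 0) :
    Nat.card {v : Fin (2*m) → 𝔽 // v ≠ 0 ∧ cond v} + 1
      = Nat.card {v : Fin (2*m) → 𝔽 // cond v} := by
  classical
  rw [Nat.card_eq_fintype_card, Nat.card_eq_fintype_card, Fintype.card_subtype,
    Fintype.card_subtype]
  have h1 : (Finset.univ.filter (fun v : Fin (2*m) → 𝔽 => v ≠ 0 ∧ cond v))
      = (Finset.univ.filter (fun v : Fin (2*m) → 𝔽 => cond v)).erase 0 := by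
    ext v
    simp only [Finset.mem_filter, Finset.mem_erase, Finset.mem_univ, true_and]
  rw [h1, Finset.card_erase_of_mem (by simp [h0])]
  have h2 : 0 < (Finset.univ.filter (fun v : Fin (2*m) → 𝔽 => cond v)).card := by
    rw [Finset.card_pos]
    exact ⟨0, by simp [h0]⟩
  omega

/-- Number of nonzero vectors in a subspace. -/
lemma card_sub (m : ℕ) (W : Submodule 𝔽 (Fin (2*m) → 𝔽)) :
    Nat.card {v : Fin (2*m) → 𝔽 // v ≠ 0 ∧ v ∈ W} + 1
      = Fintype.card 𝔽 ^ Module.finrank 𝔽 W := by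
  classical
  have e : {v : Fin (2*m) → 𝔽 // v ≠ 0 ∧ v ∈ W} ≃ {w : W // w ≠ 0} := by
    refine ⟨fun v => ⟨⟨v.1, v.2.2⟩, fun hz => v.2.1 (Subtype.ext_iff.mp hz)⟩,
      fun w => ⟨w.1.1, fun h0 => w.2 (Subtype.ext h0), w.1.2⟩, fun v => rfl, fun w => rfl⟩
  rw [Nat.card_congr e, Nat.card_eq_fintype_card, Fintype.card_subtype, Finset.filter_ne',
    Finset.card_erase_of_mem (Finset.mem_univ 0), Finset.card_univ]
  have hc : Fintype.card W = Fintype.card 𝔽 ^ Module.finrank 𝔽 W := Module.card_eq_pow_finrank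
  have hp : 0 < Fintype.card W := Fintype.card_pos
  omega


end HQaux

namespace HQaux

lemma hypQ_zero (m : ℕ) : hypQ m (0 : Fin (2*m) → 𝔽) = 0 := by
  unfold hypQ
  simp

lemma hypB_zero_right (m : ℕ) (u : Fin (2*m) → 𝔽) : hypB m u 0 = 0 := by
  rw [hypB_eq]
  simp

lemma onQ_mk (m : ℕ) (v : Fin (2*m) → 𝔽) (hv : v ≠ 0) :
    onQ (Projectivization.mk 𝔽 v hv) ↔ hypQ m v = 0 := by
  obtain ⟨a, ha⟩ := exists_unit_rep v hv
  unfold onQ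
  rw [ha, Units.smul_def, hypQ_smul]
  have h2 : ((a : 𝔽))^2 ≠ 0 := pow_ne_zero _ (Units.ne_zero a)
  constructor
  · intro h
    exact (mul_eq_zero.mp h).resolve_left h2
  · intro h
    rw [h, mul_zero]

lemma collin_mk_right (m : ℕ) (P0 : Projectivization 𝔽 (Fin (2*m) → 𝔽))
    (v : Fin (2*m) → 𝔽) (hv : v ≠ 0) :
    Collin P0 (Projectivization.mk 𝔽 v hv) ↔ hypB m P0.rep v = 0 := by
  obtain ⟨a, ha⟩ := exists_unit_rep v hv
  unfold Collin
  rw [ha, Units.smul_def, hypB_smul_right]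
  have h2 : ((a : 𝔽)) ≠ 0 := Units.ne_zero a
  constructor
  · intro h
    exact ((mul_eq_zero.mp h).resolve_left h2)
  · intro h
    rw [h, mul_zero]

lemma collin_mk_left (m : ℕ) (P1 : Projectivization 𝔽 (Fin (2*m) → 𝔽))
    (v : Fin (2*m) → 𝔽) (hv : v ≠ 0) :
    Collin (Projectivization.mk 𝔽 v hv) P1 ↔ hypB m v P1.rep = 0 := by
  obtain ⟨a, ha⟩ := exists_unit_rep v hv
  unfold Collin
  rw [ha, Units.smul_def, hypB_smul_left]
  have h2 : ((a : 𝔽)) ≠ 0 := Units.ne_zero a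
  constructor
  · intro h
    exact ((mul_eq_zero.mp h).resolve_left h2)
  · intro h
    rw [h, mul_zero]

lemma mem_mk (m : ℕ) (W : Submodule 𝔽 (Fin (2*m) → 𝔽)) (v : Fin (2*m) → 𝔽) (hv : v ≠ 0) :
    (Projectivization.mk 𝔽 v hv).rep ∈ W ↔ v ∈ W := by
  obtain ⟨a, ha⟩ := exists_unit_rep v hv
  rw [ha, Units.smul_def]
  exact W.smul_mem_iff (Units.ne_zero a)

lemma collin_symm (m : ℕ) (P P' : Projectivization 𝔽 (Fin (2*m) → 𝔽)) :
    Collin P P' ↔ Collin P' P := by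
  unfold Collin
  rw [hypB_symm]

variable [Fintype 𝔽]

/-- Count of quadric points of a line section of the polar hyperplane of `P1`. -/
lemma line_sec_count (m : ℕ) (W : Submodule 𝔽 (Fin (2*m) → 𝔽)) (hW : Module.finrank 𝔽 W = 2)
    (P1 : Projectivization 𝔽 (Fin (2*m) → 𝔽)) (hnot : ¬ (∀ P ∈ pts W, Collin P P1)) :
    Nat.card {P : Projectivization 𝔽 (Fin (2*m) → 𝔽) // P.rep ∈ W ∧ Collin P P1} = 1 := by
  classical
  set φ := hypBL m P1.rep with hφ
  set K := W ⊓ LinearMap.ker φ with hK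
  have hsetK : ∀ P : Projectivization 𝔽 (Fin (2*m) → 𝔽),
      (P.rep ∈ W ∧ Collin P P1) ↔ P.rep ∈ K := by
    intro P
    rw [hK, Submodule.mem_inf, LinearMap.mem_ker, hφ, hypBL_apply]
    exact Iff.rfl
  push_neg at hnot
  obtain ⟨P0, hP0W, hP0n⟩ := hnot
  -- the kernel has finrank 1
  have hKle : K ≤ W := inf_le_left
  have hfin : Module.finrank 𝔽 K ≤ 2 := by
    have := Submodule.finrank_mono (s := K) (t := W) hKle
    omega
  have hKne2 : Module.finrank 𝔽 K ≠ 2 := by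
    intro h2
    have : K = W := Submodule.eq_of_le_of_finrank_eq hKle (h2.trans hW.symm)
    apply hP0n
    have : P0.rep ∈ K := this ▸ hP0W
    unfold Collin
    have := ((Submodule.mem_inf).mp this).2
    rw [LinearMap.mem_ker] at this
    exact this
  have hKpos : Module.finrank 𝔽 K ≠ 0 := by
    -- produce a nonzero vector of K via rank-nullity for the restriction of φ to W
    set ψ := φ.domRestrict W with hψ
    have hrn := LinearMap.finrank_range_add_finrank_ker ψ
    rw [hW] at hrn
    have hr1 : Module.finrank 𝔽 (LinearMap.range ψ) ≤ 1 := by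
      have := Submodule.finrank_le (LinearMap.range ψ)
      rwa [Module.finrank_self] at this
    have hker1 : 1 ≤ Module.finrank 𝔽 (LinearMap.ker ψ) := by omega
    have hkerne : LinearMap.ker ψ ≠ ⊥ := by
      intro hbot
      rw [hbot] at hker1
      simp at hker1
    obtain ⟨x, hxker, hxne⟩ := (Submodule.ne_bot_iff _).mp hkerne
    intro h0
    have hKbot : K = ⊥ := Submodule.finrank_eq_zero.mp h0
    have hxK : (x : Fin (2*m) → 𝔽) ∈ K := by
      rw [hK, Submodule.mem_inf]
      refine ⟨x.2, ?_⟩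
      rw [LinearMap.mem_ker] at hxker ⊢
      exact hxker
    rw [hKbot, Submodule.mem_bot] at hxK
    exact hxne (Subtype.ext hxK)
  have hK1 : Module.finrank 𝔽 K = 1 := by omega
  -- now count
  have hcnt : Nat.card {v : Fin (2*m) → 𝔽 // v ≠ 0 ∧ v ∈ K}
      = Nat.card {P : Projectivization 𝔽 (Fin (2*m) → 𝔽) // P.rep ∈ K}
        * (Fintype.card 𝔽 - 1) :=
    card_pts m (fun P => P.rep ∈ K) (fun v => v ∈ K) (fun v hv => mem_mk m K v hv)
  have hsub := card_sub m K
  rw [hK1, pow_one] at hsub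
  have hq1 : 1 < Fintype.card 𝔽 := Fintype.one_lt_card
  have hcc : Nat.card {P : Projectivization 𝔽 (Fin (2*m) → 𝔽) // P.rep ∈ W ∧ Collin P P1}
      = Nat.card {P : Projectivization 𝔽 (Fin (2*m) → 𝔽) // P.rep ∈ K} :=
    Nat.card_congr (Equiv.subtypeEquivRight hsetK)
  rw [hcc]
  rw [hcnt] at hsub
  have hx : Nat.card {P : Projectivization 𝔽 (Fin (2*m) → 𝔽) // P.rep ∈ K}
      * (Fintype.card 𝔽 - 1) = 1 * (Fintype.card 𝔽 - 1) := by omega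
  exact Nat.eq_of_mul_eq_mul_right (by omega) hx


omit [Fintype 𝔽] in
lemma thgeom_mul (q k : ℕ) : ((q:ℤ) - 1) * (thgeom q k : ℤ) = (q:ℤ)^k - 1 := by
  unfold thgeom
  push_cast
  rw [mul_comm]
  exact geom_sum_mul (q:ℤ) k

omit [Fintype 𝔽]

lemma card_toFinset' {α : Type} (s : Set α) (hs : s.Finite) :
    hs.toFinset.card = Nat.card s := by
  rw [Nat.card_coe_set_eq, Set.ncard_eq_toFinset_card s hs]

lemma filter_card_eq {α : Type} (s : Set α) (hs : s.Finite) (p : α → Prop) [DecidablePred p] :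
    (hs.toFinset.filter p).card = Nat.card {a : α // a ∈ s ∧ p a} := by
  classical
  have hf : ({a | a ∈ s ∧ p a} : Set α).Finite := hs.subset (fun a ha => ha.1)
  have : hs.toFinset.filter p = hf.toFinset := by
    ext a
    simp [Set.Finite.mem_toFinset]
  rw [this, card_toFinset']
  rfl

lemma double_count {α : Type} (A B : Finset α) (R : α → α → Prop) [DecidableRel R] (μ : α → ℤ) :
    ∑ P ∈ A, ∑ P1 ∈ B.filter (fun P1 => R P P1), μ P1
      = ∑ P1 ∈ B, ((A.filter (fun P => R P P1)).card : ℤ) * μ P1 := by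
  classical
  have h1 : ∀ P, ∑ P1 ∈ B.filter (fun P1 => R P P1), μ P1
      = ∑ P1 ∈ B, if R P P1 then μ P1 else 0 := fun P => Finset.sum_filter _ _
  rw [Finset.sum_congr rfl (fun P _ => h1 P), Finset.sum_comm]
  apply Finset.sum_congr rfl
  intro P1 _
  rw [← Finset.sum_filter, Finset.sum_const, nsmul_eq_mul]

end HQaux

open HQaux

/-- Let `μ` satisfy Property (*) with parameter `x > 0` on `Q⁺(2n−1,q)`
and let `ℓ0` be a projective line entirely contained in the quadric.  Then
`q·Σ_{P∈ℓ0⊥} μ(P) + x·θ_{n−1} = q^{n−1}·Σ_{P∈ℓ0} μ(P) + (q+1)·x·θ_{n−2}`,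
where `ℓ0⊥` is the set of points of the quadric collinear with every point of `ℓ0`. -/
theorem line_perp_sum_identity
    {𝔽 : Type} [Field 𝔽] [Fintype 𝔽] (q n x : ℕ) (hq : Fintype.card 𝔽 = q) (hn : 2 ≤ n)
    (hx : 0 < x)
    (μ : Projectivization 𝔽 (Fin (2 * n) → 𝔽) → ℤ)
    (hstar : PropStar q n x μ)
    (ℓ0 : Submodule 𝔽 (Fin (2 * n) → 𝔽))
    (hℓ0rank : Module.finrank 𝔽 ℓ0 = 2) (hℓ0Q : ∀ P ∈ pts ℓ0, onQ P) :
    (q : ℤ) * (∑ᶠ P ∈ {P | P ∈ Qset 𝔽 n ∧ ∀ P' ∈ pts ℓ0, Collin P' P}, μ P)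
        + (x : ℤ) * thgeom q n =
      (q : ℤ) ^ (n - 1) * (∑ᶠ P ∈ pts ℓ0, μ P)
        + ((q : ℤ) + 1) * (x : ℤ) * thgeom q (n - 1) := by
  classical
  subst hq
  obtain ⟨k, rfl⟩ : ∃ k, n = k + 1 := ⟨n - 1, by omega⟩
  have hk1 : 1 ≤ k := by omega
  set cF := Fintype.card 𝔽 with hcF
  have hq1 : 1 < cF := Fintype.one_lt_card
  -- sets and finsets
  have hQfin : (Qset 𝔽 (k+1)).Finite := Set.toFinite _
  have hLfin : (pts ℓ0).Finite := Set.toFinite _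
  have hPfin : ({P | P ∈ Qset 𝔽 (k+1) ∧ ∀ P' ∈ pts ℓ0, Collin P' P} :
      Set (Projectivization 𝔽 (Fin (2 * (k+1)) → 𝔽))).Finite := Set.toFinite _
  rw [finsum_mem_eq_finite_toFinset_sum μ hPfin, finsum_mem_eq_finite_toFinset_sum μ hLfin]
  simp only [Nat.add_sub_cancel]
  -- memberships
  have hmemQ : ∀ P, P ∈ hQfin.toFinset ↔ onQ P := by
    intro P
    rw [Set.Finite.mem_toFinset]
    exact Iff.rfl
  have hmemL : ∀ P, P ∈ hLfin.toFinset ↔ P.rep ∈ ℓ0 := by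
    intro P
    rw [Set.Finite.mem_toFinset]
    exact Iff.rfl
  have hPfeq : hPfin.toFinset = hQfin.toFinset.filter
      (fun P1 => ∀ P ∈ hLfin.toFinset, Collin P P1) := by
    ext P1
    rw [Set.Finite.mem_toFinset, Finset.mem_filter, hmemQ]
    constructor
    · rintro ⟨h1, h2⟩
      exact ⟨h1, fun P hP => h2 P ((hmemL P).mp hP)⟩
    · rintro ⟨h1, h2⟩
      exact ⟨h1, fun P hP => h2 P ((hmemL P).mpr hP)⟩
  -- Property (*) in Finset form
  have hstar' : ∀ P, onQ P →
      ∑ P1 ∈ hQfin.toFinset.filter (fun P1 => Collin P P1), μ P1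
        = (x:ℤ) * thgeom cF k + (cF:ℤ)^k * μ P := by
    intro P hP
    have h := hstar P hP
    rw [finsum_mem_eq_finite_toFinset_sum μ (Set.toFinite (perp P))] at h
    have heq : (Set.toFinite (perp P)).toFinset
        = hQfin.toFinset.filter (fun P1 => Collin P P1) := by
      ext P1
      rw [Set.Finite.mem_toFinset, Finset.mem_filter, hmemQ]
      exact Iff.rfl
    rw [heq] at h
    simpa using h
  -- master sum identities
  have key1 : ∀ (Af : Finset (Projectivization 𝔽 (Fin (2 * (k+1)) → 𝔽))),
      (∀ P ∈ Af, onQ P) →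
      ∑ P ∈ Af, ∑ P1 ∈ hQfin.toFinset.filter (fun P1 => Collin P P1), μ P1
        = (Af.card : ℤ) * ((x:ℤ) * thgeom cF k) + (cF:ℤ)^k * ∑ P ∈ Af, μ P := by
    intro Af hAf
    rw [Finset.sum_congr rfl (fun P hP => hstar' P (hAf P hP)),
      Finset.sum_add_distrib, Finset.sum_const, ← Finset.mul_sum]
    push_cast
    ring
  have keyDC : ∀ (Af : Finset (Projectivization 𝔽 (Fin (2 * (k+1)) → 𝔽))),
      ∑ P ∈ Af, ∑ P1 ∈ hQfin.toFinset.filter (fun P1 => Collin P P1), μ P1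
        = ∑ P1 ∈ hQfin.toFinset, ((Af.filter (fun P => Collin P P1)).card : ℤ) * μ P1 :=
    fun Af => double_count Af hQfin.toFinset Collin μ
  -- global counts
  have hN := card_N (𝔽 := 𝔽) k
  have hQc1 : Nat.card {v : Fin (2*(k+1)) → 𝔽 // v ≠ 0 ∧ hypQ (k+1) v = 0}
      = Nat.card {P : Projectivization 𝔽 (Fin (2*(k+1)) → 𝔽) // onQ P} * (cF - 1) :=
    card_pts (k+1) onQ (fun v => hypQ (k+1) v = 0) (fun v hv => onQ_mk (k+1) v hv)
  have hQc2 : Nat.card {v : Fin (2*(k+1)) → 𝔽 // v ≠ 0 ∧ hypQ (k+1) v = 0} + 1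
      = Nat.card {v : Fin (2*(k+1)) → 𝔽 // hypQ (k+1) v = 0} :=
    card_nonzero (k+1) (fun v => hypQ (k+1) v = 0) (hypQ_zero (k+1))
  have hQcard : hQfin.toFinset.card
      = Nat.card {P : Projectivization 𝔽 (Fin (2*(k+1)) → 𝔽) // onQ P} := by
    rw [card_toFinset']
    rfl
  -- line counts
  have hLc1 : Nat.card {v : Fin (2*(k+1)) → 𝔽 // v ≠ 0 ∧ v ∈ ℓ0}
      = Nat.card {P : Projectivization 𝔽 (Fin (2*(k+1)) → 𝔽) // P.rep ∈ ℓ0} * (cF - 1) :=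
    card_pts (k+1) (fun P => P.rep ∈ ℓ0) (fun v => v ∈ ℓ0) (fun v hv => mem_mk (k+1) ℓ0 v hv)
  have hLc2 : Nat.card {v : Fin (2*(k+1)) → 𝔽 // v ≠ 0 ∧ v ∈ ℓ0} + 1 = cF ^ 2 := by
    rw [card_sub (k+1) ℓ0, hℓ0rank]
  have hLcard' : hLfin.toFinset.card
      = Nat.card {P : Projectivization 𝔽 (Fin (2*(k+1)) → 𝔽) // P.rep ∈ ℓ0} := by
    rw [card_toFinset']
    rfl
  have hLcard : (hLfin.toFinset.card : ℤ) = (cF : ℤ) + 1 := by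
    have h1 : ((cF:ℤ) - 1) * hLfin.toFinset.card + 1 = (cF:ℤ)^2 := by
      rw [hLcard']
      have := congrArg (Nat.cast (R := ℤ)) (hLc1 ▸ hLc2)
      push_cast [Nat.cast_sub (le_of_lt hq1)] at this
      linear_combination this
    have h2 : ((cF:ℤ) - 1) * hLfin.toFinset.card = ((cF:ℤ) - 1) * ((cF:ℤ) + 1) := by
      linear_combination h1
    have h3 : ((cF:ℤ) - 1) ≠ 0 := by
      have : (1:ℤ) < (cF:ℤ) := by exact_mod_cast hq1
      omega
    exact mul_left_cancel₀ h3 h2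
  -- the count of points of the line collinear with a given quadric point
  have hcntL : ∀ P1 ∈ hQfin.toFinset,
      ((hLfin.toFinset.filter (fun P => Collin P P1)).card : ℤ) * μ P1
        = μ P1 + (if (∀ P ∈ hLfin.toFinset, Collin P P1) then (cF:ℤ) * μ P1 else 0) := by
    intro P1 _
    by_cases hall : ∀ P ∈ hLfin.toFinset, Collin P P1
    · rw [if_pos hall, Finset.filter_true_of_mem hall, hLcard]
      ring
    · rw [if_neg hall]
      have hnot : ¬ (∀ P ∈ pts ℓ0, Collin P P1) := by
        intro hc
        exact hall (fun P hP => hc P ((hmemL P).mp hP))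
      have h1 : (hLfin.toFinset.filter (fun P => Collin P P1)).card
          = Nat.card {P : Projectivization 𝔽 (Fin (2*(k+1)) → 𝔽)
              // P.rep ∈ ℓ0 ∧ Collin P P1} :=
        filter_card_eq (pts ℓ0) hLfin (fun P => Collin P P1)
      rw [h1, line_sec_count (k+1) ℓ0 hℓ0rank P1 hnot]
      push_cast
      ring
  -- the count of quadric points collinear with a given quadric point
  have hcntQ : ∀ P1 ∈ hQfin.toFinset,
      ((cF:ℤ) - 1) * ((hQfin.toFinset.filter (fun P => Collin P P1)).card : ℤ)
        = (Nat.card {v : Fin (2*(k+1)) → 𝔽 // hypQ (k+1) v = 0} : ℤ)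
          + (cF:ℤ)^(2*k) - (cF:ℤ)^(2*k+1) - 1 := by
    intro P1 hP1
    have hP1Q : onQ P1 := (hmemQ P1).mp hP1
    have hrepne := Projectivization.rep_nonzero P1
    have h1 : (hQfin.toFinset.filter (fun P => Collin P P1)).card
        = Nat.card {P : Projectivization 𝔽 (Fin (2*(k+1)) → 𝔽) // onQ P ∧ Collin P P1} := by
      have := filter_card_eq (Qset 𝔽 (k+1)) hQfin (fun P => Collin P P1)
      rw [this]
      rfl
    have h2 : Nat.card {P : Projectivization 𝔽 (Fin (2*(k+1)) → 𝔽) // onQ P ∧ Collin P P1}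
        = Nat.card {P : Projectivization 𝔽 (Fin (2*(k+1)) → 𝔽) // onQ P ∧ Collin P1 P} :=
      Nat.card_congr (Equiv.subtypeEquivRight
        (fun P => and_congr_right (fun _ => collin_symm (k+1) P P1)))
    have h3 : Nat.card {v : Fin (2*(k+1)) → 𝔽 // v ≠ 0 ∧ (hypQ (k+1) v = 0 ∧ hypB (k+1) P1.rep v = 0)}
        = Nat.card {P : Projectivization 𝔽 (Fin (2*(k+1)) → 𝔽) // onQ P ∧ Collin P1 P} * (cF - 1) :=
      card_pts (k+1) (fun P => onQ P ∧ Collin P1 P)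
        (fun v => hypQ (k+1) v = 0 ∧ hypB (k+1) P1.rep v = 0)
        (fun v hv => and_congr (onQ_mk (k+1) v hv) (collin_mk_right (k+1) P1 v hv))
    have h4 : Nat.card {v : Fin (2*(k+1)) → 𝔽 // v ≠ 0 ∧ (hypQ (k+1) v = 0 ∧ hypB (k+1) P1.rep v = 0)} + 1
        = Nat.card {v : Fin (2*(k+1)) → 𝔽 // hypQ (k+1) v = 0 ∧ hypB (k+1) P1.rep v = 0} :=
      card_nonzero (k+1) (fun v => hypQ (k+1) v = 0 ∧ hypB (k+1) P1.rep v = 0)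
        ⟨hypQ_zero (k+1), hypB_zero_right (k+1) P1.rep⟩
    have h5 := card_perp_vec (k+1) P1.rep hrepne hP1Q
    -- cast everything to ℤ
    have c4 := congrArg (Nat.cast (R := ℤ)) (h3 ▸ h4)
    push_cast [Nat.cast_sub (le_of_lt hq1)] at c4
    have c5 := congrArg (Nat.cast (R := ℤ)) h5
    push_cast at c5
    -- cancel cF^2 in c5
    have hM : (Nat.card {v : Fin (2*(k+1)) → 𝔽 // hypQ (k+1) v = 0 ∧ hypB (k+1) P1.rep v = 0} : ℤ)
        = (Nat.card {v : Fin (2*(k+1)) → 𝔽 // hypQ (k+1) v = 0} : ℤ)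
          + (cF:ℤ)^(2*k) - (cF:ℤ)^(2*k+1) := by
      have hne : ((cF:ℤ))^2 ≠ 0 := by
        have : (0:ℤ) < (cF:ℤ) := by exact_mod_cast (Nat.lt_of_lt_of_le Nat.zero_lt_one (le_of_lt hq1))
        positivity
      apply mul_left_cancel₀ hne
      linear_combination c5
    rw [h1, h2]
    linear_combination c4 + hM
  -- first master equation (over the line)
  have hLQ : ∀ P ∈ hLfin.toFinset, onQ P := fun P hP => hℓ0Q P ((hmemL P).mp hP)
  have eqL : ((cF:ℤ) + 1) * ((x:ℤ) * thgeom cF k)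
        + (cF:ℤ)^k * ∑ P ∈ hLfin.toFinset, μ P
      = (∑ P ∈ hQfin.toFinset, μ P) + (cF:ℤ) * ∑ P ∈ hPfin.toFinset, μ P := by
    have e2 := keyDC hLfin.toFinset
    rw [key1 hLfin.toFinset hLQ, hLcard] at e2
    rw [Finset.sum_congr rfl hcntL, Finset.sum_add_distrib, Finset.sum_ite,
      Finset.sum_const, smul_zero, add_zero, ← hPfeq, ← Finset.mul_sum] at e2
    exact e2
  -- integer forms of the global counts
  have hQZ : ((cF:ℤ) - 1) * (hQfin.toFinset.card : ℤ) + 1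
      = (Nat.card {v : Fin (2*(k+1)) → 𝔽 // hypQ (k+1) v = 0} : ℤ) := by
    rw [hQcard]
    have h12 : Nat.card {P : Projectivization 𝔽 (Fin (2*(k+1)) → 𝔽) // onQ P} * (cF - 1) + 1
        = Nat.card {v : Fin (2*(k+1)) → 𝔽 // hypQ (k+1) v = 0} := by
      rw [← hQc1]
      exact hQc2
    have := congrArg (Nat.cast (R := ℤ)) h12
    push_cast [Nat.cast_sub (le_of_lt hq1)] at this
    linear_combination this
  have hNZ : (Nat.card {v : Fin (2*(k+1)) → 𝔽 // hypQ (k+1) v = 0} : ℤ)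
      = (cF:ℤ)^k * ((cF:ℤ)^(k+1) + (cF:ℤ) - 1) := by
    have hN' : Nat.card {v : Fin (2*(k+1)) → 𝔽 // hypQ (k+1) v = 0}
        = cF ^ k * (cF ^ (k+1) + cF - 1) := card_N k
    have hle : 1 ≤ cF ^ (k+1) + cF := by
      have := Nat.one_le_pow (k+1) cF (by omega)
      omega
    have := congrArg (Nat.cast (R := ℤ)) hN'
    push_cast [Nat.cast_sub hle] at this
    linear_combination this
  -- second master equation (over the quadric), multiplied by (cF - 1)
  have e5 : ((cF:ℤ) - 1) * ((hQfin.toFinset.card:ℤ) * ((x:ℤ) * thgeom cF k)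
        + (cF:ℤ)^k * ∑ P ∈ hQfin.toFinset, μ P)
      = ((Nat.card {v : Fin (2*(k+1)) → 𝔽 // hypQ (k+1) v = 0} : ℤ)
          + (cF:ℤ)^(2*k) - (cF:ℤ)^(2*k+1) - 1) * ∑ P ∈ hQfin.toFinset, μ P := by
    have e3 := keyDC hQfin.toFinset
    rw [key1 hQfin.toFinset (fun P hP => (hmemQ P).mp hP)] at e3
    rw [e3, Finset.mul_sum]
    rw [Finset.sum_congr rfl (fun P1 hP1 => by rw [← mul_assoc, hcntQ P1 hP1])]
    rw [← Finset.mul_sum]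
  have hg1 : ((cF:ℤ) - 1) * (thgeom cF k : ℤ) = (cF:ℤ)^k - 1 := thgeom_mul cF k
  have hgT : ((cF:ℤ) - 1) * (thgeom cF (k+1) : ℤ) = (cF:ℤ)^(k+1) - 1 := thgeom_mul cF (k+1)
  have EQ3 : ((cF:ℤ)^(2*k) - 1) * (∑ P ∈ hQfin.toFinset, μ P)
      = ((Nat.card {v : Fin (2*(k+1)) → 𝔽 // hypQ (k+1) v = 0} : ℤ) - 1)
        * ((x:ℤ) * thgeom cF k) := by
    linear_combination (-1 : ℤ) * e5 + ((x:ℤ) * (thgeom cF k : ℤ)) * hQZ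
      - (∑ P ∈ hQfin.toFinset, μ P) * hNZ
  have hcF1 : ((cF:ℤ) - 1) ≠ 0 := by
    have : (1:ℤ) < (cF:ℤ) := by exact_mod_cast hq1
    omega
  have h2k : (1:ℤ) < (cF:ℤ)^(2*k) := by
    have h1 : (1:ℤ) < (cF:ℤ) := by exact_mod_cast hq1
    calc (1:ℤ) = 1^(2*k) := (one_pow _).symm
    _ < (cF:ℤ)^(2*k) := by
        apply pow_lt_pow_left₀ h1 (by norm_num)
        omega
  have hco2 : ((cF:ℤ)^(2*k) - 1) ≠ 0 := by omega
  have hA : (∑ P ∈ hQfin.toFinset, μ P) = (x:ℤ) * thgeom cF (k+1) := by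
    apply mul_left_cancel₀ (mul_ne_zero hco2 hcF1)
    linear_combination ((cF:ℤ) - 1) * EQ3
      + (x:ℤ) * ((Nat.card {v : Fin (2*(k+1)) → 𝔽 // hypQ (k+1) v = 0} : ℤ) - 1) * hg1
      - ((cF:ℤ)^(2*k) - 1) * (x:ℤ) * hgT
      + (x:ℤ) * ((cF:ℤ)^k - 1) * hNZ
  linear_combination -eqL - hA
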